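/- If every nonprincipal ultrafilter on ℕ contains a tower (i.e., for every nonprincipal ultrafilter U there is a tower all of whose members belong to U), then ω* can be covered by nowhere dense P-sets: ω* is the union of a family of subsets each of which is a nowhere dense P-set of ω*. -/

import Mathlib

open Set

/-- `A ⊆* B`: `A` is almost contained in `B`, i.e. `A \ B` is finite. -/
def AlmostSubset (A B : Set ℕ) : Prop := (A \ B).Finite

/-- An ideal on ℕ: contains `∅`, does not contain `ℕ`, and is closed under subsets and
finite unions. -/
def IsIdealFam (I : Set (Set ℕ)) : Prop :=
  ∅ ∈ I ∧ (univ : Set ℕ) ∉ I ∧ (∀ A B : Set ℕ, B ∈ I → A ⊆ B → A ∈ I) ∧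
    ∀ A B : Set ℕ, A ∈ I → B ∈ I → A ∪ B ∈ I

/-- A P-ideal: an ideal in which every countable subfamily has a pseudounion belonging to
the ideal. -/
def IsPIdeal (I : Set (Set ℕ)) : Prop :=
  IsIdealFam I ∧ ∀ C : Set (Set ℕ), C.Countable → C ⊆ I →
    ∃ B ∈ I, ∀ A ∈ C, AlmostSubset A B

/-- A family of sets is tall if every infinite subset of ℕ has infinite intersection with
some member of the family. -/
def IsTallFam (I : Set (Set ℕ)) : Prop :=
  ∀ A : Set ℕ, A.Infinite → ∃ B ∈ I, (A ∩ B).Infinite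

/-- A filter on ℕ: contains `ℕ`, does not contain `∅`, and is closed under finite
intersections and supersets. -/
def IsFilterFam (F : Set (Set ℕ)) : Prop :=
  (univ : Set ℕ) ∈ F ∧ ∅ ∉ F ∧ (∀ A B : Set ℕ, A ∈ F → B ∈ F → A ∩ B ∈ F) ∧
    ∀ A B : Set ℕ, A ∈ F → A ⊆ B → B ∈ F

/-- A P-filter: a filter in which every countable subfamily has an infinite
pseudointersection belonging to the filter. -/
def IsPFilterFam (F : Set (Set ℕ)) : Prop :=
  IsFilterFam F ∧ ∀ C : Set (Set ℕ), C.Countable → C ⊆ F →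
    ∃ X ∈ F, X.Infinite ∧ ∀ A ∈ C, AlmostSubset X A

/-- A family of sets is nowhere dense (as a filter) if it has no infinite
pseudointersection. -/
def IsNwdFam (F : Set (Set ℕ)) : Prop :=
  ¬ ∃ X : Set ℕ, X.Infinite ∧ ∀ A ∈ F, AlmostSubset X A

/-- A (decreasing) tower: a `⊆*`-decreasing family of infinite subsets of ℕ indexed by an
ordinal `κ`, with no infinite pseudointersection. -/
def IsTower (κ : Ordinal) (A : Ordinal → Set ℕ) : Prop :=
  (∀ α < κ, (A α).Infinite) ∧
  (∀ α β : Ordinal, α < β → β < κ → AlmostSubset (A β) (A α)) ∧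
  ¬ ∃ X : Set ℕ, X.Infinite ∧ ∀ α < κ, AlmostSubset X (A α)

/-- An increasing tower: a `⊆*`-increasing family of infinite subsets of ℕ indexed by an
ordinal `κ` such that every infinite subset of ℕ has infinite intersection with some
member. -/
def IsIncTower (κ : Ordinal) (B : Ordinal → Set ℕ) : Prop :=
  (∀ α < κ, (B α).Infinite) ∧
  (∀ α β : Ordinal, α < β → β < κ → AlmostSubset (B α) (B β)) ∧
  ∀ X : Set ℕ, X.Infinite → ∃ γ < κ, (B γ ∩ X).Infinite

/-- A subset `B` of a topological space is a P-set if the intersection of countably many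
neighborhoods of `B` is again a neighborhood of `B`. -/
def IsPSet {X : Type*} [TopologicalSpace X] (B : Set X) : Prop :=
  ∀ U : ℕ → Set X, (∀ n, IsOpen (U n) ∧ B ⊆ U n) →
    ∃ V : Set X, IsOpen V ∧ B ⊆ V ∧ V ⊆ ⋂ n, U n

/-- An ultrafilter is nonprincipal if it contains no finite set. -/
def Nonprincipal (U : Ultrafilter ℕ) : Prop := ∀ A : Set ℕ, A.Finite → A ∉ U

/-- `ω* = βℕ ∖ ℕ`: the space of nonprincipal ultrafilters on ℕ with the Stone topology
(as a subspace of the space of all ultrafilters on ℕ). -/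
def OmegaStar : Type := {U : Ultrafilter ℕ // Nonprincipal U}

instance : TopologicalSpace OmegaStar := instTopologicalSpaceSubtype

/-! ### Auxiliary material -/

lemma exists_nonprincipal_mem {s : Set ℕ} (hs : s.Infinite) :
    ∃ U : Ultrafilter ℕ, Nonprincipal U ∧ s ∈ U := by
  have hne : (Filter.cofinite ⊓ Filter.principal s).NeBot := hs.cofinite_inf_principal_neBot
  set U := Ultrafilter.of (Filter.cofinite ⊓ Filter.principal s) with hU
  have hle := Ultrafilter.of_le (Filter.cofinite ⊓ Filter.principal s)
  refine ⟨U, ?_, ?_⟩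
  · intro A hA hAU
    have h1 : Aᶜ ∈ U := hle (Filter.mem_inf_of_left hA.compl_mem_cofinite)
    exact (Ultrafilter.compl_mem_iff_notMem.1 h1) hAU
  · exact hle (Filter.mem_inf_of_right (Filter.mem_principal_self s))

lemma nonprincipal_iff (U : Ultrafilter ℕ) :
    Nonprincipal U ↔ ∀ n : ℕ, ({n} : Set ℕ)ᶜ ∈ U := by
  constructor
  · intro h n
    exact Ultrafilter.compl_mem_iff_notMem.2 (h {n} (finite_singleton n))
  · intro h A hA hAU
    have h1 : (⋂ n ∈ A, ({n} : Set ℕ)ᶜ) ∈ U := (Filter.biInter_mem hA).2 fun n _ => h n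
    have h2 : Aᶜ ∈ U := by
      refine Filter.mem_of_superset h1 ?_
      intro x hx hxA
      exact (Set.mem_iInter₂.1 hx x hxA) rfl
    exact (Ultrafilter.compl_mem_iff_notMem.1 h2) hAU

lemma isClosed_nonprincipal : IsClosed {U : Ultrafilter ℕ | Nonprincipal U} := by
  have h : {U : Ultrafilter ℕ | Nonprincipal U}
      = ⋂ n : ℕ, {U : Ultrafilter ℕ | ({n} : Set ℕ)ᶜ ∈ U} := by
    ext U
    simp only [Set.mem_setOf_eq, Set.mem_iInter, nonprincipal_iff]
  rw [h]
  exact isClosed_iInter fun n => ultrafilter_isClosed_basic _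

instance : CompactSpace OmegaStar :=
  isCompact_iff_compactSpace.1 isClosed_nonprincipal.isCompact

/-- The trace on `ω*` of a basic clopen set of `βℕ`. -/
def OSBasic (s : Set ℕ) : Set OmegaStar := {V : OmegaStar | s ∈ V.1}

lemma isOpen_OSBasic (s : Set ℕ) : IsOpen (OSBasic s) :=
  (ultrafilter_isOpen_basic s).preimage (continuous_subtype_val :
    Continuous (Subtype.val : OmegaStar → Ultrafilter ℕ))

lemma isClosed_OSBasic (s : Set ℕ) : IsClosed (OSBasic s) :=
  (ultrafilter_isClosed_basic s).preimage (continuous_subtype_val :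
    Continuous (Subtype.val : OmegaStar → Ultrafilter ℕ))

lemma nonempty_OSBasic {s : Set ℕ} (hs : s.Infinite) : (OSBasic s).Nonempty := by
  obtain ⟨U, h1, h2⟩ := exists_nonprincipal_mem hs
  exact ⟨⟨U, h1⟩, h2⟩

lemma tower_pos {κ : Ordinal} {A : Ordinal → Set ℕ} (hT : IsTower κ A) : 0 < κ := by
  rcases eq_zero_or_pos κ with h | h
  · subst h
    exact absurd ⟨Set.univ, Set.infinite_univ,
      fun α hα => absurd hα (fun h => not_lt_zero h)⟩ hT.2.2
  · exact h

lemma OSBasic_mono {κ : Ordinal} {A : Ordinal → Set ℕ} (hT : IsTower κ A)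
    {α β : Ordinal} (hαβ : α ≤ β) (hβ : β < κ) : OSBasic (A β) ⊆ OSBasic (A α) := by
  rcases eq_or_lt_of_le hαβ with rfl | hlt
  · exact subset_rfl
  intro V hV
  have hfin : (A β \ A α).Finite := hT.2.1 α β hlt hβ
  have h1 : (A β \ A α)ᶜ ∈ V.1 := Ultrafilter.compl_mem_iff_notMem.2 (V.2 _ hfin)
  have h2 : A β ∩ (A β \ A α)ᶜ ∈ V.1 := Filter.inter_mem hV h1
  refine Filter.mem_of_superset h2 ?_
  rintro x ⟨hxb, hxc⟩
  by_contra hxa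
  exact hxc ⟨hxb, hxa⟩

lemma exists_pseudo (g : ℕ → Set ℕ)
    (hg : ∀ n, (⋂ k ∈ Finset.range (n + 1), g k).Infinite) :
    ∃ X : Set ℕ, X.Infinite ∧ ∀ k, (X \ g k).Finite := by
  choose f hfmem hfgt using fun n (b : ℕ) => (hg n).exists_gt b
  let x : ℕ → ℕ := fun n => Nat.rec (f 0 0) (fun n ih => f (n + 1) ih) n
  have hx : ∀ n, x n ∈ ⋂ k ∈ Finset.range (n + 1), g k := by
    intro n
    cases n with
    | zero => exact hfmem 0 0
    | succ n => exact hfmem (n + 1) (x n)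
  have hmono : StrictMono x :=
    strictMono_nat_of_lt_succ fun n => hfgt (n + 1) (x n)
  refine ⟨Set.range x, Set.infinite_range_of_injective hmono.injective, ?_⟩
  intro k
  apply ((Set.finite_Iio k).image x).subset
  rintro y ⟨⟨n, rfl⟩, hy⟩
  refine ⟨n, ?_, rfl⟩
  by_contra hkn
  simp only [Set.mem_Iio, not_lt] at hkn
  exact hy (Set.mem_iInter₂.1 (hx n) k (Finset.mem_range.2 (Nat.lt_succ_of_le hkn)))

lemma tower_bound {κ : Ordinal} {A : Ordinal → Set ℕ} (hT : IsTower κ A)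
    (f : ℕ → Ordinal) (hf : ∀ n, f n < κ) : ∃ γ, γ < κ ∧ ∀ n, f n ≤ γ := by
  by_contra hc
  push_neg at hc
  obtain ⟨hinf, hdec, hnp⟩ := hT
  have hg : ∀ n, (⋂ k ∈ Finset.range (n + 1), A (f k)).Infinite := by
    intro n
    obtain ⟨m, hm, hmax⟩ := (Finset.range (n + 1)).exists_max_image f ⟨0, by simp⟩
    have hF : (⋃ k ∈ Finset.range (n + 1), (A (f m) \ A (f k))).Finite := by
      apply (Finset.range (n + 1)).finite_toSet.biUnion
      intro k hk
      rcases eq_or_lt_of_le (hmax k hk) with heq | hlt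
      · rw [heq]; simp
      · exact hdec (f k) (f m) hlt (hf m)
    refine ((hinf (f m) (hf m)).diff hF).mono ?_
    rintro y ⟨hym, hyF⟩
    refine Set.mem_iInter₂.2 fun k hk => ?_
    by_contra hyk
    exact hyF (Set.mem_iUnion₂.2 ⟨k, hk, hym, hyk⟩)
  obtain ⟨X, hXinf, hXf⟩ := exists_pseudo (fun n => A (f n)) hg
  apply hnp
  refine ⟨X, hXinf, fun α hα => ?_⟩
  obtain ⟨n, hn⟩ := hc α hα
  have h1 : (A (f n) \ A α).Finite := hdec α (f n) hn (hf n)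
  refine ((hXf n).union h1).subset ?_
  rintro y ⟨hyX, hyα⟩
  by_cases hyn : y ∈ A (f n)
  · exact Or.inr ⟨hyn, hyα⟩
  · exact Or.inl ⟨hyX, hyn⟩

/-- The closed subset of `ω*` determined by a tower. -/
def towerSet (κ : Ordinal) (A : Ordinal → Set ℕ) : Set OmegaStar :=
  {V : OmegaStar | ∀ α, α < κ → A α ∈ V.1}

lemma towerSet_eq (κ : Ordinal) (A : Ordinal → Set ℕ) :
    towerSet κ A = ⋂ α, ⋂ (_ : α < κ), OSBasic (A α) := by
  ext V
  simp only [towerSet, OSBasic, Set.mem_setOf_eq, Set.mem_iInter]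

lemma isClosed_towerSet (κ : Ordinal) (A : Ordinal → Set ℕ) : IsClosed (towerSet κ A) := by
  rw [towerSet_eq]
  exact isClosed_iInter fun α => isClosed_iInter fun _ => isClosed_OSBasic _

lemma towerSet_nwd {κ : Ordinal} {A : Ordinal → Set ℕ} (hT : IsTower κ A) :
    IsNowhereDense (towerSet κ A) := by
  rw [IsNowhereDense, (isClosed_towerSet κ A).closure_eq, Set.eq_empty_iff_forall_notMem]
  intro V hV
  obtain ⟨O, hO, hOeq⟩ := isOpen_induced_iff.1
    (isOpen_interior (s := towerSet κ A))
  have hVO : V.1 ∈ O := by rw [← hOeq] at hV; exact hV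
  obtain ⟨b, ⟨B, rfl⟩, hVb, hbO⟩ := ultrafilterBasis_is_basis.exists_subset_of_mem_open hVO hO
  have hBV : B ∈ V.1 := hVb
  have hBinf : B.Infinite := by
    intro hfin
    exact (V.2 B hfin) hBV
  apply hT.2.2
  refine ⟨B, hBinf, fun α hα => ?_⟩
  rw [AlmostSubset]
  by_contra hfin
  have hinf : (B \ A α).Infinite := hfin
  obtain ⟨W, hW1, hW2⟩ := exists_nonprincipal_mem hinf
  have hBW : B ∈ W := Filter.mem_of_superset hW2 Set.diff_subset
  have hWK : (⟨W, hW1⟩ : OmegaStar) ∈ towerSet κ A := by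
    have : (⟨W, hW1⟩ : OmegaStar) ∈ interior (towerSet κ A) := by
      rw [← hOeq]; exact hbO hBW
    exact interior_subset this
  have hAW : A α ∈ W := hWK α hα
  have : (B \ A α) ∩ A α ∈ W := Filter.inter_mem hW2 hAW
  rw [Set.diff_inter_self] at this
  exact Ultrafilter.empty_notMem this

lemma towerSet_isPSet {κ : Ordinal} {A : Ordinal → Set ℕ} (hT : IsTower κ A) :
    IsPSet (towerSet κ A) := by
  intro U hU
  have hpos := tower_pos hT
  have step : ∀ n, ∃ α, α < κ ∧ OSBasic (A α) ⊆ U n := by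
    intro n
    by_contra hc
    push_neg at hc
    haveI : Nonempty {α : Ordinal // α < κ} := ⟨⟨0, hpos⟩⟩
    have hne : (⋂ p : {α : Ordinal // α < κ},
        (OSBasic (A p.1) ∩ (U n)ᶜ)).Nonempty := by
      apply IsCompact.nonempty_iInter_of_directed_nonempty_isCompact_isClosed
      · intro p q
        refine ⟨⟨max p.1 q.1, max_lt p.2 q.2⟩, ?_, ?_⟩
        · exact Set.inter_subset_inter (OSBasic_mono hT (le_max_left _ _)
            (max_lt p.2 q.2)) subset_rfl
        · exact Set.inter_subset_inter (OSBasic_mono hT (le_max_right _ _)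
            (max_lt p.2 q.2)) subset_rfl
      · intro p
        obtain ⟨V, hV1, hV2⟩ := Set.not_subset.1 (hc p.1 p.2)
        exact ⟨V, hV1, hV2⟩
      · intro p
        exact (((isClosed_OSBasic (A p.1)).inter (hU n).1.isClosed_compl)).isCompact
      · intro p
        exact (isClosed_OSBasic (A p.1)).inter (hU n).1.isClosed_compl
    obtain ⟨W, hW⟩ := hne
    have hWK : W ∈ towerSet κ A := by
      intro α hα
      exact (Set.mem_iInter.1 hW ⟨α, hα⟩).1
    have hWU : W ∈ U n := (hU n).2 hWK
    exact (Set.mem_iInter.1 hW ⟨0, hpos⟩).2 hWU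
  choose g hgκ hgU using step
  obtain ⟨γ, hγκ, hγ⟩ := tower_bound hT g hgκ
  refine ⟨OSBasic (A γ), isOpen_OSBasic _, fun V hV => hV γ hγκ, ?_⟩
  exact Set.subset_iInter fun n => (OSBasic_mono hT (hγ n) hγκ).trans (hgU n)

/-- If every nonprincipal ultrafilter on ℕ contains a tower, then `ω*` can be covered by
nowhere dense P-sets. -/
theorem cover_by_nwd_Psets_of_towers_in_ultrafilters
    (h : ∀ U : Ultrafilter ℕ, Nonprincipal U →
      ∃ (κ : Ordinal) (A : Ordinal → Set ℕ), IsTower κ A ∧ ∀ α < κ, A α ∈ U) :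
    ∃ 𝒞 : Set (Set OmegaStar), (∀ B ∈ 𝒞, IsNowhereDense B ∧ IsPSet B) ∧ ⋃₀ 𝒞 = univ := by
  refine ⟨{K | ∃ κ A, IsTower κ A ∧ K = towerSet κ A}, ?_, ?_⟩
  · rintro B ⟨κ, A, hT, rfl⟩
    exact ⟨towerSet_nwd hT, towerSet_isPSet hT⟩
  · apply Set.eq_univ_of_forall
    intro V
    obtain ⟨κ, A, hT, hmem⟩ := h V.1 V.2
    exact ⟨towerSet κ A, ⟨κ, A, hT, rfl⟩, fun α hα => hmem α hα⟩
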